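/- Let q : (0,∞) → ℝ be C¹ and suppose there exists x₀ ≥ 1 with q(x) < 0 and q′(x) ≤ 0 for all x ≥ x₀. Define Q(y) = 2∫₁^y q(x) dx for y ≥ 1. If ∫_{x₀}^∞ 1/q(x) dx > −∞, then ∫₁^∞ e^{−Q(y)} (∫_y^∞ e^{Q(z)} dz) dy < ∞ (i.e., condition (H3) holds). -/

import Mathlib

open MeasureTheory Set Filter Topology

/-- For `q` C¹ on `(0,∞)` with `q < 0` and `q' ≤ 0` on `[x₀,∞)`,
if `∫_{x₀}^∞ dx/q(x) > -∞` then condition (H3) holds: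
`∫₁^∞ e^{-Q(y)} ∫_y^∞ e^{Q(z)} dz dy < ∞`, where `Q(y) = 2∫₁^y q`. -/
theorem stmt12 (q : ℝ → ℝ) (hq : ContDiffOn ℝ 1 q (Ioi 0))
    (x₀ : ℝ) (hx₀ : 1 ≤ x₀)
    (hqneg : ∀ x ≥ x₀, q x < 0) (hqder : ∀ x ≥ x₀, deriv q x ≤ 0)
    (Q : ℝ → ℝ) (hQ : ∀ y, Q y = 2 * ∫ x in (1:ℝ)..y, q x)
    (hint : (∫⁻ x in Ici x₀, ENNReal.ofReal (-(1 / q x))) < ⊤) :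
    (∫⁻ y in Ici (1:ℝ), ENNReal.ofReal (Real.exp (-Q y)) *
      ∫⁻ z in Ici y, ENNReal.ofReal (Real.exp (Q z))) < ⊤ := by
  have hx0pos : (0:ℝ) < x₀ := lt_of_lt_of_le one_pos hx₀
  have hIci_sub : Ici x₀ ⊆ Ioi (0:ℝ) := fun z hz => lt_of_lt_of_le hx0pos hz
  have hqc : ContinuousOn q (Ioi 0) := hq.continuousOn
  have hq'c : ContinuousOn (deriv q) (Ioi 0) :=
    hq.continuousOn_deriv_of_isOpen isOpen_Ioi le_rfl
  have hqd : ∀ z ∈ Ioi (0:ℝ), HasDerivAt q (deriv q z) z := fun z hz =>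
    ((hq.differentiableOn one_ne_zero).differentiableAt (isOpen_Ioi.mem_nhds hz)).hasDerivAt
  -- derivative of Q
  have hQd : ∀ z ∈ Ioi (0:ℝ), HasDerivAt Q (2 * q z) z := by
    intro z hz
    have hsub : uIcc (1:ℝ) z ⊆ Ioi 0 := by
      intro w hw
      rw [mem_uIcc] at hw
      rcases hw with hw | hw <;> simp only [mem_Ioi] at hz ⊢ <;> linarith [hw.1, hw.2]
    have h1 : IntervalIntegrable q volume 1 z := (hqc.mono hsub).intervalIntegrable
    have h2 := intervalIntegral.integral_hasDerivAt_right h1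
      (hqc.stronglyMeasurableAtFilter isOpen_Ioi z hz)
      (hqc.continuousAt (isOpen_Ioi.mem_nhds hz))
    have h3 := h2.const_mul (2:ℝ)
    exact h3.congr_of_eventuallyEq (Filter.Eventually.of_forall hQ)
  have hQc : ContinuousOn Q (Ioi 0) := fun z hz =>
    ((hQd z hz).continuousAt).continuousWithinAt
  -- auxiliary function h and its derivative h'
  set h : ℝ → ℝ := fun z => Real.exp (Q z) * (2 * q z)⁻¹ with hhdef
  set h' : ℝ → ℝ := fun z => Real.exp (Q z) * (2 * q z) * (2 * q z)⁻¹ +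
    Real.exp (Q z) * (-(2 * deriv q z) / (2 * q z) ^ 2) with hh'def
  have hq0 : ∀ z ∈ Ici x₀, (2 * q z) ≠ 0 := fun z hz =>
    ne_of_lt (by linarith [hqneg z hz])
  have hhd : ∀ z ∈ Ici x₀, HasDerivAt h (h' z) z := by
    intro z hz
    have hz0 : z ∈ Ioi (0:ℝ) := hIci_sub hz
    have e1 : HasDerivAt (fun w => Real.exp (Q w)) (Real.exp (Q z) * (2 * q z)) z :=
      (hQd z hz0).exp
    have e2 : HasDerivAt (fun w => (2 * q w)⁻¹) (-(2 * deriv q z) / (2 * q z) ^ 2) z :=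
      ((hqd z hz0).const_mul 2).inv (hq0 z hz)
    exact e1.mul e2
  have key_ge : ∀ z ∈ Ici x₀, Real.exp (Q z) ≤ h' z := by
    intro z hz
    have h1 : Real.exp (Q z) * (2 * q z) * (2 * q z)⁻¹ = Real.exp (Q z) := by
      rw [mul_assoc, mul_inv_cancel₀ (hq0 z hz), mul_one]
    have h2 : 0 ≤ Real.exp (Q z) * (-(2 * deriv q z) / (2 * q z) ^ 2) :=
      mul_nonneg (Real.exp_nonneg _)
        (div_nonneg (by linarith [hqder z hz]) (sq_nonneg _))
    simp only [hh'def]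
    linarith
  have h'nonneg : ∀ z ∈ Ici x₀, 0 ≤ h' z := fun z hz =>
    le_trans (Real.exp_nonneg _) (key_ge z hz)
  -- continuity of h on Ici x₀
  have hhc : ContinuousOn h (Ici x₀) := by
    apply ContinuousOn.mul
    · exact Real.continuous_exp.comp_continuousOn (hQc.mono hIci_sub)
    · exact (continuousOn_const.mul (hqc.mono hIci_sub)).inv₀ hq0
  -- h is nonpositive on Ici x₀
  have hbdd_neg : ∀ z ∈ Ici x₀, h z ≤ 0 := by
    intro z hz
    have h1 : (2 * q z)⁻¹ ≤ 0 := inv_nonpos.mpr (by linarith [hqneg z hz])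
    have h2 := Real.exp_pos (Q z)
    simp only [hhdef]
    nlinarith
  -- h is monotone on Ici x₀
  have hmono : MonotoneOn h (Ici x₀) := by
    apply monotoneOn_of_deriv_nonneg (convex_Ici x₀) hhc
    · intro z hz
      rw [interior_Ici] at hz
      exact (hhd z (mem_Ici.2 (le_of_lt hz))).differentiableAt.differentiableWithinAt
    · intro z hz
      rw [interior_Ici] at hz
      rw [(hhd z (mem_Ici.2 (le_of_lt hz))).deriv]
      exact h'nonneg z (mem_Ici.2 (le_of_lt hz))
  -- limit of h at infinity
  set H : ℝ → ℝ := fun z => h (max z x₀) with hHdef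
  have Hmono : Monotone H := fun a b hab =>
    hmono (mem_Ici.2 (le_max_right _ _)) (mem_Ici.2 (le_max_right _ _)) (max_le_max hab le_rfl)
  have Hbdd : BddAbove (range H) := by
    refine ⟨0, ?_⟩
    rintro _ ⟨z, rfl⟩
    exact hbdd_neg _ (mem_Ici.2 (le_max_right _ _))
  have htend : Tendsto h atTop (𝓝 (⨆ z, H z)) := by
    apply (tendsto_atTop_ciSup Hmono Hbdd).congr'
    filter_upwards [eventually_ge_atTop x₀] with z hz
    simp only [hHdef, max_eq_left hz]
  have hl_le : (⨆ z, H z) ≤ 0 := ciSup_le fun z => hbdd_neg _ (mem_Ici.2 (le_max_right _ _))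
  -- KEY TAIL BOUND
  have tailbound : ∀ y ∈ Ici x₀,
      (∫⁻ z in Ici y, ENNReal.ofReal (Real.exp (Q z))) ≤ ENNReal.ofReal (-h y) := by
    intro y hy
    have hIciy : Ici y ⊆ Ici x₀ := Ici_subset_Ici.2 hy
    have hderiv' : ∀ z ∈ Ici y, HasDerivAt h (h' z) z := fun z hz => hhd z (hIciy hz)
    have hpos' : ∀ z ∈ Ioi y, 0 ≤ h' z := fun z hz =>
      h'nonneg z (hIciy (mem_Ici.2 (le_of_lt hz)))
    have hint' : IntegrableOn h' (Ioi y) :=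
      integrableOn_Ioi_deriv_of_nonneg' hderiv' hpos' htend
    have heq : ∫ z in Ioi y, h' z = (⨆ z, H z) - h y :=
      integral_Ioi_of_hasDerivAt_of_nonneg' hderiv' hpos' htend
    calc (∫⁻ z in Ici y, ENNReal.ofReal (Real.exp (Q z)))
        = ∫⁻ z in Ioi y, ENNReal.ofReal (Real.exp (Q z)) :=
          (setLIntegral_congr Ioi_ae_eq_Ici).symm
      _ ≤ ∫⁻ z in Ioi y, ENNReal.ofReal (h' z) := by
          refine lintegral_mono_ae ((ae_restrict_iff' measurableSet_Ioi).2
            (Filter.Eventually.of_forall fun z hz => ?_))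
          exact ENNReal.ofReal_le_ofReal (key_ge z (hIciy (mem_Ici.2 (le_of_lt hz))))
      _ = ENNReal.ofReal (∫ z in Ioi y, h' z) :=
          (ofReal_integral_eq_lintegral_ofReal hint'
            ((ae_restrict_iff' measurableSet_Ioi).2
              (Filter.Eventually.of_forall fun z hz => hpos' z hz))).symm
      _ ≤ ENNReal.ofReal (-h y) := by
          rw [heq]
          exact ENNReal.ofReal_le_ofReal (by linarith)
  -- TAIL OF THE OUTER INTEGRAL
  have houter_tail : (∫⁻ y in Ici x₀, ENNReal.ofReal (Real.exp (-Q y)) *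
      ∫⁻ z in Ici y, ENNReal.ofReal (Real.exp (Q z))) < ⊤ := by
    have bnd : ∀ y ∈ Ici x₀, ENNReal.ofReal (Real.exp (-Q y)) *
        (∫⁻ z in Ici y, ENNReal.ofReal (Real.exp (Q z)))
        ≤ ENNReal.ofReal 2⁻¹ * ENNReal.ofReal (-(1 / q y)) := by
      intro y hy
      have hqy : q y ≠ 0 := ne_of_lt (hqneg y hy)
      calc ENNReal.ofReal (Real.exp (-Q y)) *
            (∫⁻ z in Ici y, ENNReal.ofReal (Real.exp (Q z)))
          ≤ ENNReal.ofReal (Real.exp (-Q y)) * ENNReal.ofReal (-h y) :=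
            mul_le_mul_right (tailbound y hy) _
        _ = ENNReal.ofReal (Real.exp (-Q y) * (-h y)) :=
            (ENNReal.ofReal_mul (Real.exp_nonneg _)).symm
        _ = ENNReal.ofReal (2⁻¹ * (-(1 / q y))) := by
            congr 1
            have hexp : Real.exp (-Q y) * Real.exp (Q y) = 1 := by
              rw [← Real.exp_add]; simp
            simp only [hhdef]
            field_simp
            nlinarith [hexp]
        _ = ENNReal.ofReal 2⁻¹ * ENNReal.ofReal (-(1 / q y)) :=
            ENNReal.ofReal_mul (by norm_num)
    calc (∫⁻ y in Ici x₀, ENNReal.ofReal (Real.exp (-Q y)) *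
          ∫⁻ z in Ici y, ENNReal.ofReal (Real.exp (Q z)))
        ≤ ∫⁻ y in Ici x₀, ENNReal.ofReal 2⁻¹ * ENNReal.ofReal (-(1 / q y)) :=
          lintegral_mono_ae ((ae_restrict_iff' measurableSet_Ici).2
            (Filter.Eventually.of_forall bnd))
      _ = ENNReal.ofReal 2⁻¹ * ∫⁻ y in Ici x₀, ENNReal.ofReal (-(1 / q y)) :=
          lintegral_const_mul' _ _ ENNReal.ofReal_ne_top
      _ < ⊤ := ENNReal.mul_lt_top (ENNReal.ofReal_lt_top) hint
  -- COMPACT PART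
  have hIcc_sub : Icc (1:ℝ) x₀ ⊆ Ioi 0 := fun z hz => lt_of_lt_of_le one_pos hz.1
  obtain ⟨M, hM⟩ := (isCompact_Icc : IsCompact (Icc (1:ℝ) x₀)).exists_bound_of_continuousOn
    (hQc.mono hIcc_sub)
  set K : ENNReal := ENNReal.ofReal (Real.exp M) * volume (Ico (1:ℝ) x₀) +
    ENNReal.ofReal (-h x₀) with hKdef
  have hvol : volume (Ico (1:ℝ) x₀) < ⊤ := by
    rw [Real.volume_Ico]; exact ENNReal.ofReal_lt_top
  have hKtop : K < ⊤ := by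
    apply ENNReal.add_lt_top.2
    exact ⟨ENNReal.mul_lt_top ENNReal.ofReal_lt_top hvol, ENNReal.ofReal_lt_top⟩
  have hdisj : Disjoint (Ico (1:ℝ) x₀) (Ici x₀) :=
    (Iio_disjoint_Ici le_rfl).mono_left Ico_subset_Iio_self
  have hico_bound : ∀ y ∈ Ico (1:ℝ) x₀, ENNReal.ofReal (Real.exp (-Q y)) *
      (∫⁻ z in Ici y, ENNReal.ofReal (Real.exp (Q z)))
      ≤ ENNReal.ofReal (Real.exp M) * K := by
    intro y hy
    have hyIcc : y ∈ Icc (1:ℝ) x₀ := ⟨hy.1, le_of_lt hy.2⟩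
    have hMy := hM y hyIcc
    have hexp1 : ENNReal.ofReal (Real.exp (-Q y)) ≤ ENNReal.ofReal (Real.exp M) := by
      apply ENNReal.ofReal_le_ofReal
      apply Real.exp_le_exp.2
      have habs : |Q y| ≤ M := by simpa [Real.norm_eq_abs] using hMy
      have := abs_le.1 habs
      linarith [this.1]
    have hinner : (∫⁻ z in Ici y, ENNReal.ofReal (Real.exp (Q z))) ≤ K := by
      calc (∫⁻ z in Ici y, ENNReal.ofReal (Real.exp (Q z)))
          ≤ ∫⁻ z in Ici (1:ℝ), ENNReal.ofReal (Real.exp (Q z)) :=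
            lintegral_mono_set (Ici_subset_Ici.2 hy.1)
        _ = (∫⁻ z in Ico (1:ℝ) x₀, ENNReal.ofReal (Real.exp (Q z))) +
            ∫⁻ z in Ici x₀, ENNReal.ofReal (Real.exp (Q z)) := by
            rw [← Ico_union_Ici_eq_Ici hx₀, lintegral_union measurableSet_Ici hdisj]
        _ ≤ ENNReal.ofReal (Real.exp M) * volume (Ico (1:ℝ) x₀) +
            ENNReal.ofReal (-h x₀) := by
            apply add_le_add
            · calc (∫⁻ z in Ico (1:ℝ) x₀, ENNReal.ofReal (Real.exp (Q z)))
                  ≤ ∫⁻ _ in Ico (1:ℝ) x₀, ENNReal.ofReal (Real.exp M) := by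
                    refine lintegral_mono_ae ((ae_restrict_iff' measurableSet_Ico).2
                      (Filter.Eventually.of_forall fun z hz => ?_))
                    apply ENNReal.ofReal_le_ofReal
                    apply Real.exp_le_exp.2
                    have habs : |Q z| ≤ M := by
                      simpa [Real.norm_eq_abs] using hM z ⟨hz.1, le_of_lt hz.2⟩
                    have := abs_le.1 habs
                    linarith [this.2]
                _ = ENNReal.ofReal (Real.exp M) * volume (Ico (1:ℝ) x₀) :=
                    setLIntegral_const _ _
            · exact tailbound x₀ self_mem_Ici
        _ = K := hKdef.symm
    exact mul_le_mul' hexp1 hinner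
  have houter_compact : (∫⁻ y in Ico (1:ℝ) x₀, ENNReal.ofReal (Real.exp (-Q y)) *
      ∫⁻ z in Ici y, ENNReal.ofReal (Real.exp (Q z))) < ⊤ := by
    calc (∫⁻ y in Ico (1:ℝ) x₀, ENNReal.ofReal (Real.exp (-Q y)) *
          ∫⁻ z in Ici y, ENNReal.ofReal (Real.exp (Q z)))
        ≤ ∫⁻ _ in Ico (1:ℝ) x₀, ENNReal.ofReal (Real.exp M) * K :=
          lintegral_mono_ae ((ae_restrict_iff' measurableSet_Ico).2
            (Filter.Eventually.of_forall hico_bound))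
      _ = (ENNReal.ofReal (Real.exp M) * K) * volume (Ico (1:ℝ) x₀) :=
          setLIntegral_const _ _
      _ < ⊤ := ENNReal.mul_lt_top
          (ENNReal.mul_lt_top ENNReal.ofReal_lt_top hKtop) hvol
  -- COMBINE
  rw [← Ico_union_Ici_eq_Ici hx₀, lintegral_union measurableSet_Ici hdisj]
  exact ENNReal.add_lt_top.2 ⟨houter_compact, houter_tail⟩
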